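/- Let A be a commutative von Neumann regular ring and R = A ⋉ A the trivial extension of A by itself. For an R-module structure given by a pair (U, f) where U is an A-module and f : U → U is an A-linear map with f² = 0 (the action of (0,1) being f), the module U is flat over R if and only if ker(f) = im(f). -/

import Mathlib

set_option maxHeartbeats 1000000
set_option synthInstance.maxHeartbeats 400000


open TrivSqZeroExt

/-- The ring homomorphism `A ⋉ A → End_A U` sending `(a,b)` to `a•id + b•f`, for an
`A`-endomorphism `f` of `U` with `f² = 0`. -/
def pairRingHom {A : Type*} [CommRing A] {U : Type*} [AddCommGroup U] [Module A U]
    (f : U →ₗ[A] U) (hf : f ∘ₗ f = 0) :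
    TrivSqZeroExt A A →+* Module.End A U where
  toFun r := r.fst • (LinearMap.id : U →ₗ[A] U) + r.snd • f
  map_one' := by simp [Module.End.one_eq_id]
  map_mul' r s := by
    ext u
    have hffu : f (f u) = 0 := by
      have := DFunLike.congr_fun hf u
      simpa using this
    simp only [fst_mul, snd_mul, Module.End.mul_apply, LinearMap.add_apply,
      LinearMap.smul_apply, LinearMap.id_apply, map_add, map_smul, smul_eq_mul,
      MulOpposite.smul_eq_mul_unop, MulOpposite.unop_op, hffu, smul_zero]
    module
  map_zero' := by simp
  map_add' r s := by
    ext u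
    simp only [fst_add, snd_add, LinearMap.add_apply, LinearMap.smul_apply,
      LinearMap.id_apply, add_smul]
    module

/-- The `A ⋉ A`-module structure on `U` attached to a pair `(U, f)` with `f² = 0`:
`(a,b) • u = a • u + b • f u`. -/
def pairModule {A : Type*} [CommRing A] {U : Type*} [AddCommGroup U] [Module A U]
    (f : U →ₗ[A] U) (hf : f ∘ₗ f = 0) : Module (TrivSqZeroExt A A) U :=
  Module.compHom U (pairRingHom f hf)

section TmkApi
variable {A : Type*} [CommRing A]
def tmk (a b : A) : TrivSqZeroExt A A := inl a + inr b
@[simp] lemma tmk_fst (a b : A) : fst (tmk a b) = a := by simp [tmk]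
@[simp] lemma tmk_snd (a b : A) : snd (tmk a b) = b := by simp [tmk]
lemma tmk_fst_snd (r : TrivSqZeroExt A A) : tmk (fst r) (snd r) = r := inl_fst_add_inr_snd_eq r
lemma tmk_mul (a b c d : A) : tmk a b * tmk c d = tmk (a*c) (a*d + c*b) := by
  apply TrivSqZeroExt.ext
  · rw [tmk_fst, fst_mul, tmk_fst, tmk_fst]
  · rw [tmk_snd, snd_mul, tmk_fst, tmk_snd, tmk_fst, tmk_snd, smul_eq_mul,
      MulOpposite.smul_eq_mul_unop, MulOpposite.unop_op]
    ring
lemma tmk_add (a b c d : A) : tmk a b + tmk c d = tmk (a+c) (b+d) := by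
  apply TrivSqZeroExt.ext
  · rw [tmk_fst, fst_add, tmk_fst, tmk_fst]
  · rw [tmk_snd, snd_add, tmk_snd, tmk_snd]
@[simp] lemma tmk_zero : tmk (0:A) 0 = 0 := by simp [tmk]
lemma tmk_eq_tmk {a b c d : A} (h1 : a = c) (h2 : b = d) : tmk a b = tmk c d := by rw [h1, h2]
end TmkApi
section VNR
variable {A : Type*} [CommRing A]
lemma exists_idem_unit (hreg : ∀ a : A, ∃ b : A, a = a * b * a) (a : A) :
    ∃ e u w : A, e*e = e ∧ u*w = 1 ∧ a = u*e ∧ a*w = e := by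
  obtain ⟨t, hat⟩ := hreg a
  refine ⟨a*t, a + 1 - a*t, t*(a*t) + 1 - a*t, ?_, ?_, ?_, ?_⟩
  · linear_combination (-t) * hat
  · linear_combination (1-t)^2 * hat
  · linear_combination (1-t) * hat
  · linear_combination (1-t) * hat

/-- every principal ideal of `A ⋉ A` is generated by a `tmk e k` with orthogonal idempotents -/
lemma exists_idem_pair (hreg : ∀ a : A, ∃ b : A, a = a * b * a) (r : TrivSqZeroExt A A) :
    ∃ e k : A, e*e = e ∧ k*k = k ∧ e*k = 0 ∧
      Ideal.span {r} = Ideal.span {tmk e k} := by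
  obtain ⟨e, u, w, he, huw, hau, haw⟩ := exists_idem_unit hreg (fst r)
  set a := fst r with ha
  set b := snd r with hb
  have hr : r = tmk a b := (tmk_fst_snd r).symm
  obtain ⟨k, u2, w2, hk, hu2w2, hcu2, hcw2⟩ := exists_idem_unit hreg ((1-e)*w*b)
  have hec : e * ((1-e)*w*b) = 0 := by linear_combination (-(w*b))*he
  have hek : e * k = 0 := by
    rw [← hcw2]
    linear_combination w2 * hec
  refine ⟨e, k, he, hk, hek, le_antisymm ?_ ?_⟩ <;>
    rw [Ideal.span_singleton_le_span_singleton]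
  · -- tmk e k ∣ r
    refine ⟨tmk (e + (1-e)*u2) 0 * tmk u b, ?_⟩
    rw [hr, ← mul_assoc, tmk_mul, tmk_mul]
    refine (tmk_eq_tmk ?_ ?_).symm
    · -- (e*(e+(1-e)*u2))*u = a
      have h1 : e*(e + (1-e)*u2) = e := by linear_combination (1 - u2)*he
      rw [h1]
      linear_combination - hau
    · -- (e*(e+(1-e)*u2))*b + u*(e*0 + (e+(1-e)*u2)*k) = b
      have h1 : e*(e + (1-e)*u2) = e := by linear_combination (1 - u2)*he
      have h2 : (e + (1-e)*u2)*k = (1-e)*w*b := by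
        linear_combination hek - hcu2 + e*hcu2 - hec
      rw [h1, h2]
      -- e*b + u*(e*0 + (1-e)*w*b) = b
      linear_combination b*huw - w*b*hau + b*haw - 2*e*b*huw
  · -- r ∣ tmk e k
    refine ⟨tmk w (-(w*w*b)) * tmk (e + (1-e)*w2) 0, ?_⟩
    rw [hr, ← mul_assoc, tmk_mul, tmk_mul]
    refine (tmk_eq_tmk ?_ ?_).symm
    · -- (a*w)*(e+(1-e)*w2) = e
      rw [haw]
      linear_combination (1 - w2)*he
    · -- (a*w)*0 + (e+(1-e)*w2)*(a*(-(w*w*b)) + w*b) = k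
      have h2 : a*(-(w*w*b)) + w*b = (1-e)*w*b := by
        linear_combination (-(w*b))*haw
      rw [h2]
      -- (e+(1-e)*w2)*((1-e)*w*b) = k
      linear_combination hec + hcw2 - w2*hec
  
/-- the "box" ideal of `A ⋉ A` -/
def boxIdeal (e g : A) : Ideal (TrivSqZeroExt A A) where
  carrier := {r | fst r ∈ Ideal.span {e*g} ∧ snd r ∈ Ideal.span {g}}
  add_mem' := by
    rintro x y ⟨hx1, hx2⟩ ⟨hy1, hy2⟩
    exact ⟨by rw [fst_add]; exact add_mem hx1 hy1, by rw [snd_add]; exact add_mem hx2 hy2⟩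
  zero_mem' := by
    refine ⟨?_, ?_⟩
    · show fst (0 : TrivSqZeroExt A A) ∈ _
      rw [fst_zero]; exact zero_mem _
    · show snd (0 : TrivSqZeroExt A A) ∈ _
      rw [snd_zero]; exact zero_mem _
  smul_mem' := by
    intro c x hx
    refine ⟨?_, ?_⟩
    · show fst (c * x) ∈ _
      rw [fst_mul]
      exact Ideal.mul_mem_left _ _ hx.1
    · show snd (c * x) ∈ _
      rw [snd_mul, smul_eq_mul, MulOpposite.smul_eq_mul_unop, MulOpposite.unop_op]
      refine add_mem (Ideal.mul_mem_left _ _ hx.2) (Ideal.mul_mem_left _ _ ?_)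
      have hle : Ideal.span {e*g} ≤ Ideal.span {g} :=
        Ideal.span_singleton_le_span_singleton.mpr ⟨e, mul_comm e g⟩
      exact hle hx.1

lemma mem_boxIdeal {e g : A} {r : TrivSqZeroExt A A} :
    r ∈ boxIdeal e g ↔ fst r ∈ Ideal.span {e*g} ∧ snd r ∈ Ideal.span {g} := Iff.rfl

lemma span_tmk_eq_box (e k : A) (he : e*e = e) (hk : k*k = k) (hek : e*k = 0) :
    Ideal.span {tmk e k} = boxIdeal e (e+k) := by
  have heg : e*(e+k) = e := by linear_combination he + hek
  have hgg : (e+k)*(e+k) = e+k := by linear_combination he + hk + 2*hek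
  apply le_antisymm
  · rw [Ideal.span_le, Set.singleton_subset_iff]
    refine mem_boxIdeal.mpr ⟨?_, ?_⟩
    · rw [tmk_fst, heg]
      exact Ideal.mem_span_singleton'.mpr ⟨1, one_mul e⟩
    · rw [tmk_snd]
      exact Ideal.mem_span_singleton'.mpr ⟨k, by linear_combination hk + hek⟩
  · intro r hr
    obtain ⟨hr1, hr2⟩ := mem_boxIdeal.mp hr
    rw [heg] at hr1
    obtain ⟨x, hx⟩ := Ideal.mem_span_singleton'.mp hr1
    obtain ⟨y, hy⟩ := Ideal.mem_span_singleton'.mp hr2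
    have hxe : fst r * e = fst r := by rw [← hx]; linear_combination x*he
    have hYg : snd r * (e+k) = snd r := by rw [← hy]; linear_combination y*hgg
    rw [Ideal.mem_span_singleton']
    refine ⟨tmk (fst r + snd r * (1-e)) (snd r), ?_⟩
    rw [tmk_mul]
    conv_rhs => rw [← tmk_fst_snd r]
    refine tmk_eq_tmk ?_ ?_
    · linear_combination hxe - (snd r)*he
    · linear_combination hYg + (fst r)*hek - k*hxe - (snd r)*hek

lemma box_sup (e1 g1 e2 g2 : A) (he1 : e1*e1 = e1) (hg1 : g1*g1 = g1)
    (he2 : e2*e2 = e2) (hg2 : g2*g2 = g2) (heg1 : e1*g1 = e1) (heg2 : e2*g2 = e2) :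
    boxIdeal e1 g1 ⊔ boxIdeal e2 g2 = boxIdeal (e1+e2-e1*e2) (g1+g2-g1*g2) := by
  have hEG : (e1+e2-e1*e2)*(g1+g2-g1*g2) = e1+e2-e1*e2 := by
    linear_combination (1 - g2 - e2 + e2*g2)*heg1 + (1-g1)*heg2
  apply le_antisymm
  · refine sup_le ?_ ?_ <;> intro r hr <;> obtain ⟨h1, h2⟩ := mem_boxIdeal.mp hr <;>
      refine mem_boxIdeal.mpr ⟨?_, ?_⟩
    · rw [hEG]; rw [heg1] at h1
      exact Ideal.span_singleton_le_span_singleton.mpr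
        ⟨e1, by linear_combination (e2-1)*he1⟩ h1
    · exact Ideal.span_singleton_le_span_singleton.mpr
        ⟨g1, by linear_combination (g2-1)*hg1⟩ h2
    · rw [hEG]; rw [heg2] at h1
      exact Ideal.span_singleton_le_span_singleton.mpr
        ⟨e2, by linear_combination (e1-1)*he2⟩ h1
    · exact Ideal.span_singleton_le_span_singleton.mpr
        ⟨g2, by linear_combination (g1-1)*hg2⟩ h2
  · intro r hr
    obtain ⟨h1, h2⟩ := mem_boxIdeal.mp hr
    rw [hEG] at h1
    obtain ⟨x, hx⟩ := Ideal.mem_span_singleton'.mp h1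
    obtain ⟨y, hy⟩ := Ideal.mem_span_singleton'.mp h2
    have hsplit : r = tmk (x*e1) (y*g1) + tmk (x*e2 - x*(e1*e2)) (y*g2 - y*(g1*g2)) := by
      rw [tmk_add]
      conv_lhs => rw [← tmk_fst_snd r]
      exact tmk_eq_tmk (by linear_combination -hx) (by linear_combination -hy)
    rw [hsplit]
    refine Submodule.add_mem_sup ?_ ?_
    · refine mem_boxIdeal.mpr ⟨?_, ?_⟩
      · rw [tmk_fst, heg1]
        exact Ideal.mem_span_singleton'.mpr ⟨x, rfl⟩
      · rw [tmk_snd]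
        exact Ideal.mem_span_singleton'.mpr ⟨y, rfl⟩
    · refine mem_boxIdeal.mpr ⟨?_, ?_⟩
      · rw [tmk_fst, heg2]
        exact Ideal.mem_span_singleton'.mpr ⟨x - x*e1, by ring⟩
      · rw [tmk_snd]
        exact Ideal.mem_span_singleton'.mpr ⟨y - y*g1, by ring⟩

/-- every finitely generated ideal of `A ⋉ A` is principal, generated by `tmk` of
orthogonal idempotents. -/
lemma exists_gen (hreg : ∀ a : A, ∃ b : A, a = a * b * a)
    {I : Ideal (TrivSqZeroExt A A)} (hI : I.FG) :
    ∃ r : TrivSqZeroExt A A, I = Ideal.span {r} := by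
  have main : ∃ e g : A, e*e = e ∧ g*g = g ∧ e*g = e ∧ I = boxIdeal e g := by
    refine Submodule.fg_induction
      (motive := fun J _ => ∃ e g : A, e*e = e ∧ g*g = g ∧ e*g = e ∧ J = boxIdeal e g) ?_ ?_ I hI
    · intro x
      obtain ⟨e, k, he, hk, hek, hspan⟩ := exists_idem_pair hreg x
      refine ⟨e, e+k, he, by linear_combination he + hk + 2*hek,
        by linear_combination he + hek, ?_⟩
      show Ideal.span {x} = _
      rw [hspan, span_tmk_eq_box e k he hk hek]
    · rintro J1 J2 _ _ ⟨e1, g1, he1, hg1, heg1, rfl⟩ ⟨e2, g2, he2, hg2, heg2, rfl⟩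
      refine ⟨e1+e2-e1*e2, g1+g2-g1*g2, ?_, ?_, ?_,
        (box_sup e1 g1 e2 g2 he1 hg1 he2 hg2 heg1 heg2)⟩
      · linear_combination (1 - 2*e2 + e2*e2)*he1 + (1-e1)*he2
      · linear_combination (1 - 2*g2 + g2*g2)*hg1 + (1-g1)*hg2
      · linear_combination (1 - g2 - e2 + e2*g2)*heg1 + (1-g1)*heg2
  obtain ⟨e, g, he, hg, heg, hbox⟩ := main
  refine ⟨tmk e (g - e), ?_⟩
  have h1 : (g-e)*(g-e) = g-e := by linear_combination hg + he - 2*heg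
  have h2 : e*(g-e) = 0 := by linear_combination heg - he
  rw [hbox, span_tmk_eq_box e (g-e) he h1 h2]
  have h3 : e + (g - e) = g := by ring
  rw [h3]

/-- Key relation lemma: if `ker f = range f` and `r • u = 0` (written out in `A`-module
terms), then `u` is a combination `Σ sᵢ • wᵢ` with `sᵢ * r = 0`. -/
lemma relation_decomp (hreg : ∀ a : A, ∃ b : A, a = a * b * a)
    {U : Type*} [AddCommGroup U] [Module A U] (f : U →ₗ[A] U) (hf : f ∘ₗ f = 0)
    (hker : LinearMap.ker f = LinearMap.range f) (r : TrivSqZeroExt A A) (u : U)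
    (hru : fst r • u + snd r • f u = 0) :
    ∃ (s₁ s₂ s₃ : TrivSqZeroExt A A) (w₁ w₂ w₃ : U),
      s₁ * r = 0 ∧ s₂ * r = 0 ∧ s₃ * r = 0 ∧
      (fst s₁ • w₁ + snd s₁ • f w₁) + (fst s₂ • w₂ + snd s₂ • f w₂)
        + (fst s₃ • w₃ + snd s₃ • f w₃) = u := by
  set a := fst r with ha
  set b := snd r with hb
  obtain ⟨t, hat⟩ := hreg a
  have hffu : f (f u) = 0 := by
    have := DFunLike.congr_fun hf u
    simpa using this
  have hafu : a • f u = 0 := by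
    have h := congrArg f hru
    simpa [map_add, map_smul, hffu, smul_zero] using h
  have hefu : (a*t) • f u = 0 := by
    rw [mul_comm, mul_smul, hafu, smul_zero]
  have heu : (a*t) • u + (t*b) • f u = 0 := by
    have h := congrArg (fun z => t • z) hru
    simp only [smul_add, smul_smul, smul_zero] at h
    rw [mul_comm t a] at h
    exact h
  have h0 : (1 - a*t)*a = 0 := by linear_combination hat
  obtain ⟨g, u2, w2, hg, hu2w2, hcu2, hcw2⟩ := exists_idem_unit hreg ((1 - a*t)*b)
  have hcfu : ((1 - a*t)*b) • f u = 0 := by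
    have h := congrArg (fun z => (1 - a*t) • z) hru
    simp only [smul_add, smul_smul, smul_zero] at h
    rw [h0, zero_smul, zero_add] at h
    exact h
  have hgfu : g • f u = 0 := by
    rw [← hcw2, mul_comm, mul_smul, hcfu, smul_zero]
  have hfgv : f (g • (u - (a*t) • u)) = 0 := by
    rw [map_smul, map_sub, map_smul, hefu, sub_zero, hgfu]
  have hmem : g • (u - (a*t) • u) ∈ LinearMap.range f := by
    rw [← hker]
    exact hfgv
  obtain ⟨w, hw⟩ := hmem
  have he : (a*t)*(a*t) = a*t := by linear_combination (-t)*hat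
  have heuu : ((a*t)*(a*t)) • u = (a*t) • u := by rw [he]
  have hgc : g * ((1 - a*t)*b) = (1 - a*t)*b := by
    linear_combination g*hcu2 + u2*hg - hcu2
  refine ⟨tmk ((1-a*t)*(1-g)) 0, tmk 0 (-(t*b*(1-a*t))), tmk 0 (1-a*t), u, u, w,
    ?_, ?_, ?_, ?_⟩
  · conv_lhs => rw [← tmk_fst_snd r, ← ha, ← hb]
    rw [tmk_mul]
    refine (tmk_eq_tmk ?_ ?_).trans tmk_zero
    · linear_combination (1-g)*h0
    · linear_combination -hgc
  · conv_lhs => rw [← tmk_fst_snd r, ← ha, ← hb]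
    rw [tmk_mul]
    refine (tmk_eq_tmk ?_ ?_).trans tmk_zero
    · ring
    · linear_combination (-(t*b))*h0
  · conv_lhs => rw [← tmk_fst_snd r, ← ha, ← hb]
    rw [tmk_mul]
    refine (tmk_eq_tmk ?_ ?_).trans tmk_zero
    · ring
    · linear_combination h0
  · rw [tmk_fst, tmk_snd, tmk_fst, tmk_snd, tmk_fst, tmk_snd, hw]
    linear_combination (norm := module) (-1 : A) • heu + (t*b) • hefu + g • heuu

open TensorProduct in
lemma tensor_span_singleton {R : Type*} [CommRing R] {U : Type*} [AddCommGroup U]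
    [Module R U] (r : R) (x : (Ideal.span {r} : Ideal R) ⊗[R] U) :
    ∃ u : U, x = (⟨r, Ideal.subset_span rfl⟩ : Ideal.span {r}) ⊗ₜ[R] u := by
  induction x using TensorProduct.induction_on with
  | zero => exact ⟨0, (TensorProduct.tmul_zero _ _).symm⟩
  | tmul s u =>
    obtain ⟨c, hc⟩ := Ideal.mem_span_singleton'.mp s.2
    refine ⟨c • u, ?_⟩
    rw [← TensorProduct.smul_tmul]
    congr 1
    exact Subtype.ext (by simpa [smul_eq_mul] using hc.symm)
  | add x y hx hy =>
    obtain ⟨ux, hux⟩ := hx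
    obtain ⟨uy, huy⟩ := hy
    exact ⟨ux + uy, by rw [TensorProduct.tmul_add, hux, huy]⟩

lemma fst_eq_zero_of_mem_span {x : TrivSqZeroExt A A}
    (hx : x ∈ Ideal.span {tmk (0:A) 1}) : fst x = 0 := by
  obtain ⟨c, hc⟩ := Ideal.mem_span_singleton'.mp hx
  rw [← hc, fst_mul, tmk_fst, mul_zero]

open TensorProduct in
lemma flat_of_ker_eq_range (hreg : ∀ a : A, ∃ b : A, a = a * b * a)
    {U : Type*} [AddCommGroup U] [Module A U] (f : U →ₗ[A] U) (hf : f ∘ₗ f = 0)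
    [inst : Module (TrivSqZeroExt A A) U]
    (hact : ∀ (r : TrivSqZeroExt A A) (u : U), r • u = fst r • u + snd r • f u)
    (hker : LinearMap.ker f = LinearMap.range f) :
    Module.Flat (TrivSqZeroExt A A) U := by
  rw [Module.Flat.iff_rTensor_injective]
  intro I hI
  obtain ⟨ρ, rfl⟩ := exists_gen hreg hI
  rw [injective_iff_map_eq_zero]
  intro x hx
  obtain ⟨u, rfl⟩ := tensor_span_singleton ρ x
  rw [LinearMap.rTensor_tmul] at hx
  have hρu : ρ • u = 0 := by
    have h := congrArg (TensorProduct.lid (TrivSqZeroExt A A) U) hx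
    simpa [TensorProduct.lid_tmul] using h
  rw [hact] at hρu
  obtain ⟨s₁, s₂, s₃, w₁, w₂, w₃, h1, h2, h3, hsum⟩ :=
    relation_decomp hreg f hf hker ρ u hρu
  have husum : u = s₁ • w₁ + s₂ • w₂ + s₃ • w₃ := by
    rw [hact, hact, hact]; exact hsum.symm
  have key : ∀ (s : TrivSqZeroExt A A) (w : U), s * ρ = 0 →
      (⟨ρ, Ideal.subset_span rfl⟩ : Ideal.span {ρ}) ⊗ₜ[TrivSqZeroExt A A] (s • w) = 0 := by
    intro s w hs
    rw [← TensorProduct.smul_tmul]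
    have hz : s • (⟨ρ, Ideal.subset_span rfl⟩ : Ideal.span {ρ}) = 0 :=
      Subtype.ext (by simpa [smul_eq_mul] using hs)
    rw [hz, TensorProduct.zero_tmul]
  rw [husum, TensorProduct.tmul_add, TensorProduct.tmul_add,
    key s₁ w₁ h1, key s₂ w₂ h2, key s₃ w₃ h3, add_zero, add_zero]

section Reverse

variable {U : Type*} [AddCommGroup U] [Module A U]

/-- the image of `f` as an `A ⋉ A`-submodule -/
def rangeSub (f : U →ₗ[A] U) (hffz : ∀ v : U, f (f v) = 0)
    [Module (TrivSqZeroExt A A) U]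
    (hact : ∀ (r : TrivSqZeroExt A A) (u : U), r • u = fst r • u + snd r • f u) :
    Submodule (TrivSqZeroExt A A) U where
  carrier := Set.range f
  add_mem' := by rintro x y ⟨p, rfl⟩ ⟨q, rfl⟩; exact ⟨p + q, map_add f p q⟩
  zero_mem' := ⟨0, map_zero f⟩
  smul_mem' := by
    rintro c x ⟨p, rfl⟩
    refine ⟨fst c • p, ?_⟩
    rw [map_smul, hact c (f p), hffz, smul_zero, add_zero]

lemma mem_rangeSub {f : U →ₗ[A] U} {hffz : ∀ v : U, f (f v) = 0}
    [Module (TrivSqZeroExt A A) U]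
    {hact : ∀ (r : TrivSqZeroExt A A) (u : U), r • u = fst r • u + snd r • f u}
    {x : U} : x ∈ rangeSub f hffz hact ↔ ∃ p, f p = x := Iff.rfl

/-- the bilinear map `(s, v) ↦ [snd s • v]` on `span {(0,1)} × U` -/
def BMap (f : U →ₗ[A] U) (hffz : ∀ v : U, f (f v) = 0)
    [Module (TrivSqZeroExt A A) U]
    (hact : ∀ (r : TrivSqZeroExt A A) (u : U), r • u = fst r • u + snd r • f u) :
    (Ideal.span {tmk (0:A) 1} : Ideal (TrivSqZeroExt A A)) →ₗ[TrivSqZeroExt A A]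
      U →ₗ[TrivSqZeroExt A A] U ⧸ rangeSub f hffz hact where
  toFun s :=
    { toFun := fun v => Submodule.Quotient.mk (snd (s : TrivSqZeroExt A A) • v)
      map_add' := by
        intro v w
        show Submodule.Quotient.mk (snd (s : TrivSqZeroExt A A) • (v + w)) = _
        rw [smul_add]
        exact Submodule.Quotient.mk_add _
      map_smul' := by
        intro c v
        show Submodule.Quotient.mk (snd (s : TrivSqZeroExt A A) • (c • v)) = _
        have hlin : snd (s : TrivSqZeroExt A A) • (c • v)
            = c • (snd (s : TrivSqZeroExt A A) • v) := by
          rw [hact c v, hact c (snd (s : TrivSqZeroExt A A) • v), map_smul]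
          rw [smul_add]
          rw [smul_smul, smul_smul, smul_smul, smul_smul]
          rw [mul_comm (snd (s : TrivSqZeroExt A A)) (fst c),
            mul_comm (snd (s : TrivSqZeroExt A A)) (snd c)]
        rw [hlin, Submodule.Quotient.mk_smul]
        rfl }
  map_add' s s' := by
    ext v
    show Submodule.Quotient.mk (snd ((s + s' : _) : TrivSqZeroExt A A) • v) = _
    rw [Submodule.coe_add, snd_add, add_smul]
    exact Submodule.Quotient.mk_add _
  map_smul' c s := by
    ext v
    show Submodule.Quotient.mk (snd ((c • s : _) : TrivSqZeroExt A A) • v) = _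
    have hsnd : snd ((c • s : _) : TrivSqZeroExt A A)
        = fst c * snd (s : TrivSqZeroExt A A) := by
      rw [Submodule.coe_smul, smul_eq_mul, snd_mul, smul_eq_mul,
        MulOpposite.smul_eq_mul_unop, MulOpposite.unop_op,
        fst_eq_zero_of_mem_span s.2, mul_zero, add_zero]
    rw [hsnd]
    show _ = c • Submodule.Quotient.mk (snd (s : TrivSqZeroExt A A) • v)
    rw [← Submodule.Quotient.mk_smul, Submodule.Quotient.eq]
    refine ⟨-(snd c • (snd (s : TrivSqZeroExt A A) • v)), ?_⟩
    rw [map_neg, map_smul, map_smul, hact c (snd (s : TrivSqZeroExt A A) • v), map_smul]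
    rw [mul_smul]
    abel

open TensorProduct in
lemma ker_le_range_of_flat (f : U →ₗ[A] U) (hf : f ∘ₗ f = 0)
    [inst : Module (TrivSqZeroExt A A) U]
    (hact : ∀ (r : TrivSqZeroExt A A) (u : U), r • u = fst r • u + snd r • f u)
    (hflat : Module.Flat (TrivSqZeroExt A A) U) :
    LinearMap.ker f ≤ LinearMap.range f := by
  intro u hu
  have hu' : f u = 0 := hu
  have hIfg : (Ideal.span {tmk (0:A) 1} : Ideal (TrivSqZeroExt A A)).FG := ⟨{tmk 0 1}, by simp⟩
  have hinj := (Module.Flat.iff_rTensor_injective (R := TrivSqZeroExt A A) (M := U)).mp hflat hIfg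
  have hffz : ∀ v : U, f (f v) = 0 := by
    intro v
    have := DFunLike.congr_fun hf v
    simpa using this
  set ξ : (Ideal.span {tmk (0:A) 1} : Ideal (TrivSqZeroExt A A)) ⊗[TrivSqZeroExt A A] U :=
    (⟨tmk (0:A) 1, Ideal.subset_span rfl⟩ :
      (Ideal.span {tmk (0:A) 1} : Ideal (TrivSqZeroExt A A))) ⊗ₜ[TrivSqZeroExt A A] u with hξ
  have hξ0 : ξ = 0 := by
    apply hinj
    rw [map_zero, hξ, LinearMap.rTensor_tmul]
    apply (TensorProduct.lid (TrivSqZeroExt A A) U).injective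
    rw [LinearEquiv.map_zero, TensorProduct.lid_tmul]
    show tmk (0:A) 1 • u = 0
    rw [hact, tmk_fst, tmk_snd, zero_smul, one_smul, zero_add, hu']
  have hφξ : TensorProduct.lift (BMap f hffz hact) ξ = Submodule.Quotient.mk u := by
    rw [hξ, TensorProduct.lift.tmul]
    show Submodule.Quotient.mk (snd (tmk (0:A) 1) • u) = _
    rw [tmk_snd, one_smul]
  have hmk0 : (Submodule.Quotient.mk u : U ⧸ rangeSub f hffz hact) = 0 := by
    rw [← hφξ, hξ0, map_zero]
  obtain ⟨p, hp⟩ := (Submodule.Quotient.mk_eq_zero _).mp hmk0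
  exact ⟨p, hp⟩

end Reverse


end VNR

/-- For `A` von Neumann regular and `R = A ⋉ A`, the `R`-module `(U, f)` is flat over `R`
if and only if `ker f = im f`. -/
theorem stmt_7 {A : Type*} [CommRing A] (hreg : ∀ a : A, ∃ b : A, a = a * b * a)
    {U : Type*} [AddCommGroup U] [Module A U] (f : U →ₗ[A] U) (hf : f ∘ₗ f = 0) :
    letI : Module (TrivSqZeroExt A A) U := pairModule f hf
    Module.Flat (TrivSqZeroExt A A) U ↔ LinearMap.ker f = LinearMap.range f := by
  letI : Module (TrivSqZeroExt A A) U := pairModule f hf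
  have hact : ∀ (r : TrivSqZeroExt A A) (u : U), r • u = fst r • u + snd r • f u :=
    fun r u => rfl
  show Module.Flat (TrivSqZeroExt A A) U ↔ LinearMap.ker f = LinearMap.range f
  constructor
  · intro hflat
    refine le_antisymm (ker_le_range_of_flat f hf hact hflat) ?_
    rintro _ ⟨w, rfl⟩
    show f (f w) = 0
    have := DFunLike.congr_fun hf w
    simpa using this
  · intro hker
    exact flat_of_ker_eq_range hreg f hf hact hker
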